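/- Let G be a 3-uniform hypergraph with at least two edges. There is a constant C = C(G) such that for all N ≥ 3 and all q ≥ C · (N³/ex(N, G)) · log N, there is a coloring of the edges of the complete 3-graph on N vertices with q colors containing no monochromatic copy of G; in particular r(G;q) > N for such q. -/

import Mathlib

/-- A 3-uniform hypergraph with vertices drawn from ℕ. -/
structure ThreeGraph where
  verts : Finset ℕ
  edges : Finset (Finset ℕ)
  edge_card : ∀ e ∈ edges, e.card = 3
  edge_sub : ∀ e ∈ edges, e ⊆ verts

/-- A 3-graph is tripartite if its vertex set can be partitioned into three parts so that
every edge has exactly one vertex in each part. -/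
def Tripartite (G : ThreeGraph) : Prop :=
  ∃ V1 V2 V3 : Finset ℕ,
    Disjoint V1 V2 ∧ Disjoint V1 V3 ∧ Disjoint V2 V3 ∧
    V1 ∪ V2 ∪ V3 = G.verts ∧
    ∀ e ∈ G.edges, (e ∩ V1).card = 1 ∧ (e ∩ V2).card = 1 ∧ (e ∩ V3).card = 1

/-- Membership in the family 𝒰₁: there is a vertex subset intersecting every edge in
exactly one vertex. -/
def InU1 (G : ThreeGraph) : Prop :=
  ∃ W : Finset ℕ, W ⊆ G.verts ∧ ∀ e ∈ G.edges, (e ∩ W).card = 1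

/-- `Reducible G H F` : `G` is reducible to the pair `(H, F)` by collapsing a collapsible
set `U` (with `F = G[U]`), where the new vertex of `H` is `v`. -/
def Reducible (G H F : ThreeGraph) : Prop :=
  ∃ (U : Finset ℕ) (v : ℕ),
    U ⊆ G.verts ∧ 2 ≤ U.card ∧ U.card < G.verts.card ∧
    (∀ e ∈ G.edges, (e ∩ U).card ≠ 2) ∧
    v ∉ G.verts ∧
    H.verts = (G.verts \ U) ∪ {v} ∧
    H.edges = G.edges.filter (fun e => e ∩ U = ∅) ∪
      (G.edges.filter (fun e => (e ∩ U).card = 1)).image (fun e => (e \ U) ∪ {v}) ∧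
    F.verts = U ∧
    F.edges = G.edges.filter (fun e => e ⊆ U)

/-- `MemU i G` means `G ∈ 𝒰ᵢ`: `𝒰₀` is the family of tripartite 3-graphs, `𝒰₁` of 3-graphs
with a vertex set meeting every edge exactly once, the families are nested, and for `i ≥ 2`,
`G ∈ 𝒰ᵢ` whenever `G` is reducible to `(H, F)` with `H ∈ 𝒰ᵢ₋₁` and `F ∈ 𝒰ᵢ`. -/
inductive MemU : ℕ → ThreeGraph → Prop where
  | zero (G : ThreeGraph) : Tripartite G → MemU 0 G
  | one (G : ThreeGraph) : InU1 G → MemU 1 G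
  | mono (i : ℕ) (G : ThreeGraph) : MemU i G → MemU (i + 1) G
  | reduce (i : ℕ) (G H F : ThreeGraph) :
      Reducible G H F → MemU (i + 1) H → MemU (i + 2) F → MemU (i + 2) G

/-- `G ∈ 𝒰 = ⋃ᵢ 𝒰ᵢ`. -/
def InU (G : ThreeGraph) : Prop := ∃ i, MemU i G

/-- A monochromatic copy of `G` in color `i` under the coloring `χ` of the triples of
`Fin N`. -/
def MonoCopy {N q : ℕ} (χ : Finset (Fin N) → Fin q) (i : Fin q) (G : ThreeGraph) : Prop :=
  ∃ f : ℕ → Fin N, Set.InjOn f ↑G.verts ∧ ∀ e ∈ G.edges, χ (e.image f) = i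

/-- `N` vertices suffice to find, in any `q`-coloring, a monochromatic copy of `Gs i` in
color `i` for some `i`. -/
def RamseyProp {q : ℕ} (Gs : Fin q → ThreeGraph) (N : ℕ) : Prop :=
  ∀ χ : Finset (Fin N) → Fin q, ∃ i : Fin q, MonoCopy χ i (Gs i)

/-- The Ramsey number `r(G₁, …, G_q)`. -/
noncomputable def ramseyNumber {q : ℕ} (Gs : Fin q → ThreeGraph) : ℕ :=
  sInf {N | RamseyProp Gs N}

/-- The `q`-color Ramsey number `r(G; q)`. -/
noncomputable def rq (G : ThreeGraph) (q : ℕ) : ℕ :=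
  ramseyNumber (fun _ : Fin q => G)

/-- `H` contains a copy of `G`. -/
def ContainsCopy (H G : ThreeGraph) : Prop :=
  ∃ f : ℕ → ℕ, Set.InjOn f ↑G.verts ∧ (∀ v ∈ G.verts, f v ∈ H.verts) ∧
    ∀ e ∈ G.edges, e.image f ∈ H.edges

/-- The Turán (extremal) number `ex(N, G)`: the maximum number of edges of a `G`-free
3-graph on `N` vertices. -/
noncomputable def exNum (N : ℕ) (G : ThreeGraph) : ℕ :=
  sSup {m | ∃ H : ThreeGraph, H.verts = Finset.range N ∧ ¬ ContainsCopy H G ∧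
    H.edges.card = m}

section Aux
open Finset

lemma noCopy_of_card_le_one (H G : ThreeGraph) (hG : 2 ≤ G.edges.card)
    (hH : H.edges.card ≤ 1) : ¬ ContainsCopy H G := by
  rintro ⟨f, hinj, _, hmap⟩
  obtain ⟨e1, he1, e2, he2, hne⟩ := Finset.one_lt_card.mp hG
  have h1 := hmap e1 he1
  have h2 := hmap e2 he2
  have : e1.image f ≠ e2.image f := by
    intro h
    apply hne
    have := hinj.image_eq_image_iff (s₁ := ↑e1) (s₂ := ↑e2)
      (Finset.coe_subset.mpr (G.edge_sub e1 he1)) (Finset.coe_subset.mpr (G.edge_sub e2 he2))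
    rw [← Finset.coe_image, ← Finset.coe_image] at this
    exact_mod_cast this.mp (by rw [Finset.coe_image, Finset.coe_image] at *; exact_mod_cast Finset.coe_inj.mpr h)
  have hcard : 2 ≤ H.edges.card := Finset.one_lt_card.mpr ⟨_, h1, _, h2, this⟩
  omega

lemma exNum_mem (G : ThreeGraph) (hG : 2 ≤ G.edges.card) {N : ℕ} (hN : 3 ≤ N) :
    1 ≤ exNum N G ∧ exNum N G ≤ N.choose 3 ∧
    ∃ H : ThreeGraph, H.verts = Finset.range N ∧ ¬ ContainsCopy H G ∧
      H.edges.card = exNum N G := by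
  set S := {m | ∃ H : ThreeGraph, H.verts = Finset.range N ∧ ¬ ContainsCopy H G ∧
    H.edges.card = m} with hSdef
  have hbdd : BddAbove S := by
    refine ⟨N.choose 3, ?_⟩
    rintro m ⟨H, hv, -, hc⟩
    have hsub : H.edges ⊆ Finset.powersetCard 3 (Finset.range N) := by
      intro e he
      exact Finset.mem_powersetCard.mpr ⟨hv ▸ H.edge_sub e he, H.edge_card e he⟩
    calc m = H.edges.card := hc.symm
      _ ≤ (Finset.powersetCard 3 (Finset.range N)).card := Finset.card_le_card hsub
      _ = N.choose 3 := by rw [Finset.card_powersetCard, Finset.card_range]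
  have h1 : (1 : ℕ) ∈ S := by
    refine ⟨⟨Finset.range N, {({0,1,2} : Finset ℕ)}, ?_, ?_⟩, rfl, ?_, ?_⟩
    · intro e he; simp at he; subst he; decide
    · intro e he; simp at he; subst he
      intro x hx; simp at hx; simp [Finset.mem_range]; omega
    · exact noCopy_of_card_le_one _ _ hG (by simp)
    · simp
  have hne : S.Nonempty := ⟨1, h1⟩
  have hmem := Nat.sSup_mem hne hbdd
  refine ⟨le_csSup hbdd h1, ?_, hmem⟩
  refine csSup_le hne ?_
  rintro m ⟨H, hv, -, hc⟩
  have hsub : H.edges ⊆ Finset.powersetCard 3 (Finset.range N) := by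
    intro e he
    exact Finset.mem_powersetCard.mpr ⟨hv ▸ H.edge_sub e he, H.edge_card e he⟩
  calc m = H.edges.card := hc.symm
    _ ≤ (Finset.powersetCard 3 (Finset.range N)).card := Finset.card_le_card hsub
    _ = N.choose 3 := by rw [Finset.card_powersetCard, Finset.card_range]



open Finset

variable {N : ℕ}

lemma perm_image_mul (π σ : Equiv.Perm (Fin N)) (t : Finset (Fin N)) :
    t.image ⇑(π * σ) = (t.image ⇑σ).image ⇑π := by
  rw [Finset.image_image]; rfl

lemma exists_perm_image (e e' : Finset (Fin N)) (h : e.card = e'.card) :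
    ∃ π : Equiv.Perm (Fin N), e.image ⇑π = e' := by
  classical
  have h1 : Fintype.card {x // x ∈ e} = Fintype.card {x // x ∈ e'} := by
    simp [Fintype.card_coe, h]
  have h2 : Fintype.card {x // ¬ x ∈ e} = Fintype.card {x // ¬ x ∈ e'} := by
    rw [Fintype.card_subtype_compl, Fintype.card_subtype_compl, Fintype.card_coe,
      Fintype.card_coe, h]
  set π := Equiv.subtypeCongr (Fintype.equivOfCardEq h1) (Fintype.equivOfCardEq h2) with hπ
  refine ⟨π, ?_⟩
  have hmem : ∀ x ∈ e, π x ∈ e' := by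
    intro x hx
    have : π x = ((Fintype.equivOfCardEq h1) ⟨x, hx⟩ : Fin N) := by
      simp [hπ, Equiv.subtypeCongr, hx]
    rw [this]
    exact ((Fintype.equivOfCardEq h1) ⟨x, hx⟩).2
  apply Finset.eq_of_subset_of_card_le
  · intro y hy; obtain ⟨x, hx, rfl⟩ := Finset.mem_image.mp hy; exact hmem x hx
  · rw [Finset.card_image_of_injective _ π.injective, h]

lemma fiber_const (t e e' : Finset (Fin N)) (h : e.card = e'.card) :
    ((univ : Finset (Equiv.Perm (Fin N))).filter
      (fun σ : Equiv.Perm (Fin N) => t.image ⇑σ = e)).card =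
    ((univ : Finset (Equiv.Perm (Fin N))).filter
      (fun σ : Equiv.Perm (Fin N) => t.image ⇑σ = e')).card := by
  classical
  obtain ⟨π, hπ⟩ := exists_perm_image e e' h
  apply Finset.card_nbij' (i := fun σ => π * σ) (j := fun τ => π⁻¹ * τ)
  · intro σ hσ
    simp only [Finset.mem_coe, Finset.mem_filter, Finset.mem_univ, true_and] at hσ ⊢
    rw [perm_image_mul, hσ, hπ]
  · intro τ hτ
    simp only [Finset.mem_coe, Finset.mem_filter, Finset.mem_univ, true_and] at hτ ⊢
    rw [perm_image_mul, hτ, ← hπ, Finset.image_image]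
    have hcomp : ⇑π⁻¹ ∘ ⇑π = _root_.id := by funext x; simp
    rw [hcomp, Finset.image_id]
  · intro σ _; simp [← mul_assoc]
  · intro τ _; simp [← mul_assoc]

lemma fiber_count (t : Finset (Fin N)) (ht : t.card = 3) (e : Finset (Fin N))
    (he : e ∈ powersetCard 3 (univ : Finset (Fin N))) :
    ((univ : Finset (Equiv.Perm (Fin N))).filter
      (fun σ : Equiv.Perm (Fin N) => t.image ⇑σ = e)).card *
      (powersetCard 3 (univ : Finset (Fin N))).card =
    Fintype.card (Equiv.Perm (Fin N)) := by
  classical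
  have hfib := Finset.card_eq_sum_card_fiberwise
    (s := (univ : Finset (Equiv.Perm (Fin N)))) (t := powersetCard 3 (univ : Finset (Fin N)))
    (f := fun σ : Equiv.Perm (Fin N) => t.image ⇑σ)
    (fun σ _ => by
      beta_reduce
      rw [Finset.mem_coe, Finset.mem_powersetCard]
      exact ⟨Finset.subset_univ _, by rw [Finset.card_image_of_injective _ σ.injective, ht]⟩)
  have hconst : ∀ e' ∈ powersetCard 3 (univ : Finset (Fin N)),
      ((univ : Finset (Equiv.Perm (Fin N))).filter
        (fun σ : Equiv.Perm (Fin N) => t.image ⇑σ = e')).card =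
      ((univ : Finset (Equiv.Perm (Fin N))).filter
        (fun σ : Equiv.Perm (Fin N) => t.image ⇑σ = e)).card := by
    intro e' he'
    exact fiber_const t e' e (by
      rw [(Finset.mem_powersetCard.mp he').2, (Finset.mem_powersetCard.mp he).2])
  rw [← Finset.card_univ, hfib, Finset.sum_congr rfl hconst, Finset.sum_const, smul_eq_mul,
    mul_comm]

lemma exists_perm_cover (E' S : Finset (Finset (Fin N)))
    (hE' : E' ⊆ powersetCard 3 (univ : Finset (Fin N)))
    (hS : S ⊆ powersetCard 3 (univ : Finset (Fin N))) :
    ∃ σ : Equiv.Perm (Fin N), S.card * E'.card ≤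
      (S.filter (fun t => t.image ⇑σ ∈ E')).card *
        (powersetCard 3 (univ : Finset (Fin N))).card := by
  classical
  set T := (powersetCard 3 (univ : Finset (Fin N))).card with hT
  set P := Fintype.card (Equiv.Perm (Fin N)) with hP
  -- for each triple t, the number of permutations covering it
  have step1 : ∀ t ∈ S,
      ((univ : Finset (Equiv.Perm (Fin N))).filter
        (fun σ : Equiv.Perm (Fin N) => t.image ⇑σ ∈ E')).card * T = E'.card * P := by
    intro t htS
    have ht3 : t.card = 3 := (Finset.mem_powersetCard.mp (hS htS)).2
    have hfib := Finset.card_eq_sum_card_fiberwise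
      (s := (univ : Finset (Equiv.Perm (Fin N))).filter
        (fun σ : Equiv.Perm (Fin N) => t.image ⇑σ ∈ E'))
      (t := E') (f := fun σ : Equiv.Perm (Fin N) => t.image ⇑σ)
      (fun σ hσ => (Finset.mem_filter.mp hσ).2)
    have hfibeq : ∀ e ∈ E',
        (((univ : Finset (Equiv.Perm (Fin N))).filter
          (fun σ : Equiv.Perm (Fin N) => t.image ⇑σ ∈ E')).filter
          (fun σ : Equiv.Perm (Fin N) => t.image ⇑σ = e)).card * T = P := by
      intro e he
      have : ((univ : Finset (Equiv.Perm (Fin N))).filter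
          (fun σ : Equiv.Perm (Fin N) => t.image ⇑σ ∈ E')).filter
          (fun σ : Equiv.Perm (Fin N) => t.image ⇑σ = e) =
          (univ : Finset (Equiv.Perm (Fin N))).filter
          (fun σ : Equiv.Perm (Fin N) => t.image ⇑σ = e) := by
        rw [Finset.filter_filter]
        apply Finset.filter_congr
        intro σ _
        constructor
        · rintro ⟨-, h⟩; exact h
        · intro h; exact ⟨h ▸ he, h⟩
      rw [this]
      exact fiber_count t ht3 e (hE' he)
    calc ((univ : Finset (Equiv.Perm (Fin N))).filter
          (fun σ : Equiv.Perm (Fin N) => t.image ⇑σ ∈ E')).card * T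
        = (∑ e ∈ E', (((univ : Finset (Equiv.Perm (Fin N))).filter
            (fun σ : Equiv.Perm (Fin N) => t.image ⇑σ ∈ E')).filter
            (fun σ : Equiv.Perm (Fin N) => t.image ⇑σ = e)).card) * T := by rw [← hfib]
      _ = ∑ e ∈ E', (((univ : Finset (Equiv.Perm (Fin N))).filter
            (fun σ : Equiv.Perm (Fin N) => t.image ⇑σ ∈ E')).filter
            (fun σ : Equiv.Perm (Fin N) => t.image ⇑σ = e)).card * T := by
          rw [Finset.sum_mul]
      _ = ∑ _e ∈ E', P := Finset.sum_congr rfl hfibeq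
      _ = E'.card * P := by rw [Finset.sum_const, smul_eq_mul]
  -- swap the double count
  have swap : ∑ σ : Equiv.Perm (Fin N), (S.filter (fun t => t.image ⇑σ ∈ E')).card =
      ∑ t ∈ S, ((univ : Finset (Equiv.Perm (Fin N))).filter
        (fun σ : Equiv.Perm (Fin N) => t.image ⇑σ ∈ E')).card := by
    simp_rw [Finset.card_filter]
    exact Finset.sum_comm
  have total : (∑ σ : Equiv.Perm (Fin N), (S.filter (fun t => t.image ⇑σ ∈ E')).card) * T =
      S.card * E'.card * P := by
    rw [swap, Finset.sum_mul]
    rw [Finset.sum_congr rfl step1, Finset.sum_const, smul_eq_mul, ← mul_assoc]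
  have hexists : ∃ σ ∈ (univ : Finset (Equiv.Perm (Fin N))),
      S.card * E'.card ≤ (S.filter (fun t => t.image ⇑σ ∈ E')).card * T := by
    apply Finset.exists_le_of_sum_le Finset.univ_nonempty
    rw [Finset.sum_const, ← Finset.sum_mul, total, Finset.card_univ, smul_eq_mul]
    ring_nf
    rw [hP]
    exact le_of_eq (by ring)
  obtain ⟨σ, -, hσ⟩ := hexists
  exact ⟨σ, hσ⟩

lemma greedy (E' : Finset (Finset (Fin N)))
    (hE' : E' ⊆ powersetCard 3 (univ : Finset (Fin N))) (k : ℕ) :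
    ∃ L : List (Equiv.Perm (Fin N)), L.length = k ∧
      ((powersetCard 3 (univ : Finset (Fin N))).filter
        (fun t => ∀ σ ∈ L, t.image ⇑σ ∉ E')).card *
        (powersetCard 3 (univ : Finset (Fin N))).card ^ k ≤
      (powersetCard 3 (univ : Finset (Fin N))).card *
        ((powersetCard 3 (univ : Finset (Fin N))).card - E'.card) ^ k := by
  induction k with
  | zero =>
    refine ⟨[], rfl, ?_⟩
    have h0 : (powersetCard 3 (univ : Finset (Fin N))).filter
        (fun t => ∀ σ ∈ ([] : List (Equiv.Perm (Fin N))), t.image ⇑σ ∉ E') =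
        powersetCard 3 (univ : Finset (Fin N)) := Finset.filter_true_of_mem (by simp)
    rw [h0, pow_zero, pow_zero]
  | succ k ih =>
    obtain ⟨L, hlen, hbound⟩ := ih
    obtain ⟨σ, hσ⟩ := exists_perm_cover E'
      ((powersetCard 3 (univ : Finset (Fin N))).filter
        (fun t => ∀ σ ∈ L, t.image ⇑σ ∉ E')) hE' (Finset.filter_subset _ _)
    refine ⟨σ :: L, by simp [hlen], ?_⟩
    have huncL : (powersetCard 3 (univ : Finset (Fin N))).filter
        (fun t => ∀ τ ∈ σ :: L, t.image ⇑τ ∉ E') =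
        ((powersetCard 3 (univ : Finset (Fin N))).filter
          (fun t => ∀ τ ∈ L, t.image ⇑τ ∉ E')).filter (fun t => t.image ⇑σ ∉ E') := by
      ext t
      simp only [Finset.mem_filter, List.forall_mem_cons]
      exact ⟨fun h => ⟨⟨h.1, h.2.2⟩, h.2.1⟩, fun h => ⟨h.1.1, h.2, h.1.2⟩⟩
    rw [huncL]
    set S := (powersetCard 3 (univ : Finset (Fin N))).filter
        (fun t => ∀ τ ∈ L, t.image ⇑τ ∉ E') with hSdef
    set T := (powersetCard 3 (univ : Finset (Fin N))).card with hT
    have hcard : (S.filter (fun t => t.image ⇑σ ∉ E')).card =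
        S.card - (S.filter (fun t => t.image ⇑σ ∈ E')).card := by
      have := Finset.card_filter_add_card_filter_not
        (s := S) (p := fun t => t.image ⇑σ ∈ E')
      omega
    have hstep : (S.filter (fun t => t.image ⇑σ ∉ E')).card * T ≤ S.card * (T - E'.card) := by
      rw [hcard, Nat.sub_mul, Nat.mul_sub]
      exact Nat.sub_le_sub_left hσ _
    calc (S.filter (fun t => t.image ⇑σ ∉ E')).card * T ^ (k + 1)
        = (S.filter (fun t => t.image ⇑σ ∉ E')).card * T * T ^ k := by ring
      _ ≤ S.card * (T - E'.card) * T ^ k := Nat.mul_le_mul hstep le_rfl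
      _ = (T - E'.card) * (S.card * T ^ k) := by ring
      _ ≤ (T - E'.card) * (T * (T - E'.card) ^ k) := Nat.mul_le_mul le_rfl hbound
      _ = T * (T - E'.card) ^ (k + 1) := by ring

lemma cover_exists (hN : 0 < N) (E' : Finset (Finset (Fin N)))
    (hE' : E' ⊆ powersetCard 3 (univ : Finset (Fin N))) (q : ℕ)
    (harith : (powersetCard 3 (univ : Finset (Fin N))).card *
        ((powersetCard 3 (univ : Finset (Fin N))).card - E'.card) ^ q <
      (powersetCard 3 (univ : Finset (Fin N))).card ^ q) :
    ∃ σs : Fin q → Equiv.Perm (Fin N), ∀ t : Finset (Fin N), t.card = 3 →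
      ∃ i : Fin q, t.image ⇑(σs i) ∈ E' := by
  classical
  obtain ⟨L, hlen, hbound⟩ := greedy E' hE' q
  set T := (powersetCard 3 (univ : Finset (Fin N))).card with hT
  have hzero : ((powersetCard 3 (univ : Finset (Fin N))).filter
      (fun t => ∀ σ ∈ L, t.image ⇑σ ∉ E')).card = 0 := by
    by_contra h
    have h1 : 1 ≤ ((powersetCard 3 (univ : Finset (Fin N))).filter
      (fun t => ∀ σ ∈ L, t.image ⇑σ ∉ E')).card := Nat.one_le_iff_ne_zero.mpr h
    have : T ^ q ≤ ((powersetCard 3 (univ : Finset (Fin N))).filter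
      (fun t => ∀ σ ∈ L, t.image ⇑σ ∉ E')).card * T ^ q := by
      calc T ^ q = 1 * T ^ q := (one_mul _).symm
        _ ≤ _ := Nat.mul_le_mul h1 le_rfl
    omega
  have hempty := Finset.card_eq_zero.mp hzero
  refine ⟨fun i => L.getD i 1, ?_⟩
  intro t ht
  have htmem : t ∈ powersetCard 3 (univ : Finset (Fin N)) :=
    Finset.mem_powersetCard.mpr ⟨Finset.subset_univ _, ht⟩
  have : ¬ (∀ σ ∈ L, t.image ⇑σ ∉ E') := by
    intro hall
    have : t ∈ (powersetCard 3 (univ : Finset (Fin N))).filter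
        (fun t => ∀ σ ∈ L, t.image ⇑σ ∉ E') := Finset.mem_filter.mpr ⟨htmem, hall⟩
    rw [hempty] at this
    exact absurd this (Finset.notMem_empty _)
  push_neg at this
  obtain ⟨σ, hσL, hσ⟩ := this
  obtain ⟨n, hnlt, hget⟩ := List.mem_iff_getElem.mp hσL
  refine ⟨⟨n, by rw [← hlen]; exact hnlt⟩, ?_⟩
  show t.image ⇑(L.getD n 1) ∈ E'
  rw [List.getD_eq_getElem L 1 hnlt, hget]
  exact hσ


lemma good_coloring (G : ThreeGraph) (hG : 2 ≤ G.edges.card) (N q : ℕ) (hN : 3 ≤ N)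
    (hq1 : 1 ≤ q)
    (harith : N.choose 3 * (N.choose 3 - exNum N G) ^ q < N.choose 3 ^ q) :
    ∃ χ : Finset (Fin N) → Fin q, ∀ i : Fin q, ¬ MonoCopy χ i G := by
  classical
  obtain ⟨h1, hle, H, hHv, hHfree, hHcard⟩ := exNum_mem G hG hN
  have hN0 : 0 < N := by omega
  set emb : ℕ → Fin N := fun x => ⟨x % N, Nat.mod_lt x hN0⟩ with hemb
  have hembval : ∀ x, x < N → ((emb x : Fin N) : ℕ) = x := by
    intro x hx; simp [hemb, Nat.mod_eq_of_lt hx]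
  set E' : Finset (Finset (Fin N)) := H.edges.image (fun e => e.image emb) with hE'
  have hback : ∀ e ∈ H.edges, (e.image emb).image (fun x : Fin N => (x : ℕ)) = e := by
    intro e he
    rw [Finset.image_image]
    have : ∀ x ∈ e, ((fun x : Fin N => (x : ℕ)) ∘ emb) x = _root_.id x := by
      intro x hx
      have hxN : x < N := Finset.mem_range.mp (hHv ▸ H.edge_sub e he hx)
      simp [hemb, Function.comp, Nat.mod_eq_of_lt hxN]
    rw [Finset.image_congr this, Finset.image_id]
  have hE'sub : E' ⊆ powersetCard 3 (univ : Finset (Fin N)) := by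
    intro t ht
    obtain ⟨e, he, rfl⟩ := Finset.mem_image.mp ht
    refine Finset.mem_powersetCard.mpr ⟨Finset.subset_univ _, ?_⟩
    have hinj : Set.InjOn emb ↑e := by
      intro x hx y hy hxy
      have hxN : x < N := Finset.mem_range.mp (hHv ▸ H.edge_sub e he hx)
      have hyN : y < N := Finset.mem_range.mp (hHv ▸ H.edge_sub e he hy)
      have := congrArg (fun z : Fin N => (z : ℕ)) hxy
      simpa [hemb, Nat.mod_eq_of_lt hxN, Nat.mod_eq_of_lt hyN] using this
    rw [Finset.card_image_of_injOn hinj, H.edge_card e he]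
  have hE'card : E'.card = exNum N G := by
    rw [hE', Finset.card_image_of_injOn, hHcard]
    intro e1 he1 e2 he2 heq
    have := congrArg (Finset.image (fun x : Fin N => (x : ℕ))) heq
    rwa [hback e1 he1, hback e2 he2] at this
  have hpc : (powersetCard 3 (univ : Finset (Fin N))).card = N.choose 3 := by
    rw [Finset.card_powersetCard, Finset.card_univ, Fintype.card_fin]
  obtain ⟨σs, hσs⟩ := cover_exists hN0 E' hE'sub q (by rw [hpc, hE'card]; exact harith)
  refine ⟨fun t => if h : ∃ i : Fin q, t.image ⇑(σs i) ∈ E' then h.choose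
    else ⟨0, hq1⟩, ?_⟩
  rintro i ⟨f, hinj, hmono⟩
  apply hHfree
  refine ⟨fun v => ((σs i) (f v) : ℕ), ?_, ?_, ?_⟩
  · intro x hx y hy hxy
    have h1 : (σs i) (f x) = (σs i) (f y) := Fin.val_injective hxy
    exact hinj hx hy ((σs i).injective h1)
  · intro v _
    rw [hHv]
    exact Finset.mem_range.mpr ((σs i) (f v)).2
  · intro e he
    have hesub : ↑e ⊆ (↑G.verts : Set ℕ) := Finset.coe_subset.mpr (G.edge_sub e he)
    have ht3 : (e.image f).card = 3 := by
      rw [Finset.card_image_of_injOn (hinj.mono hesub), G.edge_card e he]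
    have hcov := hσs (e.image f) ht3
    have hchoose : hcov.choose = i := by
      have h2 := hmono e he
      beta_reduce at h2
      rwa [dif_pos hcov] at h2
    have hmem : (e.image f).image ⇑(σs i) ∈ E' := hchoose ▸ hcov.choose_spec
    obtain ⟨e0, he0, heq⟩ := Finset.mem_image.mp hmem
    have : e.image (fun v => ((σs i) (f v) : ℕ)) =
        ((e.image f).image ⇑(σs i)).image (fun x : Fin N => (x : ℕ)) := by
      rw [Finset.image_image, Finset.image_image]; rfl
    rw [this, ← heq, hback e0 he0]
    exact he0


section InfRamsey
variable {q : ℕ}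

lemma pigeon (S : Set ℕ) (hS : S.Infinite) (c : ℕ → Fin q) :
    ∃ i : Fin q, {x | x ∈ S ∧ c x = i}.Infinite := by
  by_contra h
  push_neg at h
  have hsub : S ⊆ ⋃ i ∈ (Finset.univ : Finset (Fin q)), {x | x ∈ S ∧ c x = i} := by
    intro x hx
    exact Set.mem_biUnion (Finset.mem_univ (c x)) ⟨hx, rfl⟩
  exact hS (Set.Finite.subset
    (Set.Finite.biUnion (Finset.finite_toSet _) (fun i _ => h i)) hsub)

lemma ramsey2 (χ : ℕ → ℕ → Fin q) (S : Set ℕ) (hS : S.Infinite) :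
    ∃ T : Set ℕ, T ⊆ S ∧ T.Infinite ∧ ∃ i : Fin q,
      ∀ x ∈ T, ∀ y ∈ T, x < y → χ x y = i := by
  classical
  have step2 : ∀ S' : Set ℕ, S'.Infinite → ∃ S'' : Set ℕ, S''.Infinite ∧
      S'' ⊆ S' \ {sInf S'} ∧ ∀ x ∈ S'', ∀ y ∈ S'', χ (sInf S') x = χ (sInf S') y := by
    intro S' hSi
    obtain ⟨i, hi⟩ := pigeon (S' \ {sInf S'}) (hSi.diff (Set.finite_singleton _)) (χ (sInf S'))
    refine ⟨{x | x ∈ S' \ {sInf S'} ∧ χ (sInf S') x = i}, hi, fun x hx => hx.1, ?_⟩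
    intro x hx y hy; rw [hx.2, hy.2]
  choose nextS hinf hsub hcol using step2
  let F : ℕ → {A : Set ℕ // A.Infinite} := fun n =>
    Nat.rec ⟨S, hS⟩ (fun _ p => ⟨nextS p.1 p.2, hinf p.1 p.2⟩) n
  set a : ℕ → ℕ := fun n => sInf (F n).1 with ha
  have hsubset : ∀ n, (F (n+1)).1 ⊆ (F n).1 \ {a n} := fun n => hsub _ _
  have hanti : ∀ m n, m ≤ n → (F n).1 ⊆ (F m).1 := by
    intro m n hmn
    induction n with
    | zero => have : m = 0 := Nat.le_zero.mp hmn; subst this; exact subset_rfl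
    | succ k ih =>
      rcases Nat.lt_or_ge m (k+1) with h | h
      · exact (fun x hx => (ih (Nat.lt_succ_iff.mp h)) ((hsubset k hx).1))
      · have : m = k + 1 := le_antisymm hmn h
        subst this; exact subset_rfl
  have hamem : ∀ n, a n ∈ (F n).1 := fun n => Nat.sInf_mem ((F n).2.nonempty)
  have hlt : ∀ n, ∀ x ∈ (F (n+1)).1, a n < x := by
    intro n x hx
    have hxS : x ∈ (F n).1 := (hsubset n hx).1
    have hne : x ≠ a n := fun h => (hsubset n hx).2 (by rw [h]; rfl)
    exact lt_of_le_of_ne (Nat.sInf_le hxS) (Ne.symm hne)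
  have hmono : StrictMono a :=
    strictMono_nat_of_lt_succ (fun n => hlt n _ (hamem (n+1)))
  set c : ℕ → Fin q := fun n => χ (a n) (a (n+1)) with hc
  have hcol2 : ∀ m n, m < n → χ (a m) (a n) = c m := by
    intro m n hmn
    have h1 : a n ∈ (F (m+1)).1 := hanti (m+1) n hmn (hamem n)
    have h2 : a (m+1) ∈ (F (m+1)).1 := hamem (m+1)
    exact hcol (F m).1 (F m).2 (a n) h1 (a (m+1)) h2
  obtain ⟨i, hI⟩ := pigeon Set.univ Set.infinite_univ c
  refine ⟨a '' {x | x ∈ Set.univ ∧ c x = i}, ?_, ?_, i, ?_⟩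
  · rintro x ⟨n, -, rfl⟩
    exact hanti 0 n (Nat.zero_le n) (hamem n)
  · exact hI.image (hmono.injective.injOn)
  · rintro x ⟨m, hm, rfl⟩ y ⟨n, hn, rfl⟩ hxy
    have hmn : m < n := hmono.lt_iff_lt.mp hxy
    rw [hcol2 m n hmn, hm.2]

lemma ramsey3 (χ : ℕ → ℕ → ℕ → Fin q) (S : Set ℕ) (hS : S.Infinite) :
    ∃ T : Set ℕ, T ⊆ S ∧ T.Infinite ∧ ∃ i : Fin q,
      ∀ x ∈ T, ∀ y ∈ T, ∀ z ∈ T, x < y → y < z → χ x y z = i := by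
  classical
  have step3 : ∀ S' : Set ℕ, S'.Infinite → ∃ S'' : Set ℕ, S''.Infinite ∧
      S'' ⊆ S' \ {sInf S'} ∧ ∀ x ∈ S'', ∀ y ∈ S'', ∀ z ∈ S'', ∀ w ∈ S'',
        x < y → z < w → χ (sInf S') x y = χ (sInf S') z w := by
    intro S' hSi
    obtain ⟨T, hTsub, hTinf, i, hTcol⟩ :=
      ramsey2 (χ (sInf S')) (S' \ {sInf S'}) (hSi.diff (Set.finite_singleton _))
    refine ⟨T, hTinf, hTsub, ?_⟩
    intro x hx y hy z hz w hw hxy hzw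
    rw [hTcol x hx y hy hxy, hTcol z hz w hw hzw]
  choose nextS hinf hsub hcol using step3
  let F : ℕ → {A : Set ℕ // A.Infinite} := fun n =>
    Nat.rec ⟨S, hS⟩ (fun _ p => ⟨nextS p.1 p.2, hinf p.1 p.2⟩) n
  set a : ℕ → ℕ := fun n => sInf (F n).1 with ha
  have hsubset : ∀ n, (F (n+1)).1 ⊆ (F n).1 \ {a n} := fun n => hsub _ _
  have hanti : ∀ m n, m ≤ n → (F n).1 ⊆ (F m).1 := by
    intro m n hmn
    induction n with
    | zero => have : m = 0 := Nat.le_zero.mp hmn; subst this; exact subset_rfl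
    | succ k ih =>
      rcases Nat.lt_or_ge m (k+1) with h | h
      · exact (fun x hx => (ih (Nat.lt_succ_iff.mp h)) ((hsubset k hx).1))
      · have : m = k + 1 := le_antisymm hmn h
        subst this; exact subset_rfl
  have hamem : ∀ n, a n ∈ (F n).1 := fun n => Nat.sInf_mem ((F n).2.nonempty)
  have hlt : ∀ n, ∀ x ∈ (F (n+1)).1, a n < x := by
    intro n x hx
    have hxS : x ∈ (F n).1 := (hsubset n hx).1
    have hne : x ≠ a n := fun h => (hsubset n hx).2 (by rw [h]; rfl)
    exact lt_of_le_of_ne (Nat.sInf_le hxS) (Ne.symm hne)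
  have hmono : StrictMono a :=
    strictMono_nat_of_lt_succ (fun n => hlt n _ (hamem (n+1)))
  set c : ℕ → Fin q := fun n => χ (a n) (a (n+1)) (a (n+2)) with hc
  have hcol3 : ∀ m n p, m < n → n < p → χ (a m) (a n) (a p) = c m := by
    intro m n p hmn hnp
    have h1 : a n ∈ (F (m+1)).1 := hanti (m+1) n hmn (hamem n)
    have h2 : a p ∈ (F (m+1)).1 := hanti (m+1) p (lt_trans hmn hnp) (hamem p)
    have h3 : a (m+1) ∈ (F (m+1)).1 := hamem (m+1)
    have h4 : a (m+2) ∈ (F (m+1)).1 := hanti (m+1) (m+2) (Nat.le_succ _) (hamem (m+2))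
    exact hcol (F m).1 (F m).2 (a n) h1 (a p) h2 (a (m+1)) h3 (a (m+2)) h4
      (hmono hnp) (hmono (Nat.lt_succ_self (m+1)))
  obtain ⟨i, hI⟩ := pigeon Set.univ Set.infinite_univ c
  refine ⟨a '' {x | x ∈ Set.univ ∧ c x = i}, ?_, ?_, i, ?_⟩
  · rintro x ⟨n, -, rfl⟩
    exact hanti 0 n (Nat.zero_le n) (hamem n)
  · exact hI.image (hmono.injective.injOn)
  · rintro x ⟨m, hm, rfl⟩ y ⟨n, hn, rfl⟩ z ⟨p, hp, rfl⟩ hxy hyz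
    rw [hcol3 m n p (hmono.lt_iff_lt.mp hxy) (hmono.lt_iff_lt.mp hyz), hm.2]

lemma triple_sorted (x y z : ℕ) (hxy : x ≠ y) (hxz : x ≠ z) (hyz : y ≠ z) :
    ∃ a b c : ℕ, a < b ∧ b < c ∧ ({x, y, z} : Finset ℕ) = {a, b, c} := by
  rcases Nat.lt_or_ge x y with h1 | h1 <;> rcases Nat.lt_or_ge y z with h2 | h2 <;>
    rcases Nat.lt_or_ge x z with h3 | h3
  · exact ⟨x, y, z, h1, h2, rfl⟩
  · omega
  · exact ⟨x, z, y, h3, by omega, by ext w; simp; tauto⟩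
  · exact ⟨z, x, y, by omega, h1, by ext w; simp; tauto⟩
  · exact ⟨y, x, z, by omega, h3, by ext w; simp; tauto⟩
  · exact ⟨y, z, x, by omega, by omega, by ext w; simp; tauto⟩
  · omega
  · exact ⟨z, y, x, by omega, by omega, by ext w; simp; tauto⟩

lemma ramsey3_finset (χ : Finset ℕ → Fin q) :
    ∃ T : Set ℕ, T.Infinite ∧ ∃ i : Fin q,
      ∀ t : Finset ℕ, ↑t ⊆ T → t.card = 3 → χ t = i := by
  classical
  obtain ⟨T, -, hTinf, i, hcol⟩ :=
    ramsey3 (fun x y z => χ {x, y, z}) Set.univ Set.infinite_univ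
  refine ⟨T, hTinf, i, ?_⟩
  intro t htT ht3
  obtain ⟨x, y, z, hxy, hxz, hyz, rfl⟩ := Finset.card_eq_three.mp ht3
  obtain ⟨a, b, c, hab, hbc, heq⟩ := triple_sorted x y z hxy hxz hyz
  have hmem : ∀ w ∈ ({a, b, c} : Finset ℕ), w ∈ T := by
    intro w hw
    apply htT
    rw [heq]
    exact_mod_cast hw
  rw [heq]
  exact hcol a (hmem a (by simp)) b (hmem b (by simp)) c (hmem c (by simp)) hab hbc

end InfRamsey


lemma ramsey_exists (G : ThreeGraph) (q : ℕ) (hq : 0 < q) :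
    ∃ N, RamseyProp (fun _ : Fin q => G) N := by
  classical
  by_contra h
  push_neg at h
  simp only [RamseyProp, not_forall, not_exists] at h
  choose χN hχN using h
  -- colorings of triples of ℕ induced by each χN (n+1)
  set emb : (n : ℕ) → ℕ → Fin (n+1) :=
    fun n x => ⟨x % (n+1), Nat.mod_lt x (Nat.succ_pos n)⟩ with hembdef
  set ψ : ℕ → Finset ℕ → Fin q := fun n t => χN (n+1) (t.image (emb n)) with hψ
  set U := Filter.hyperfilter ℕ with hU
  have hlim : ∀ t : Finset ℕ, ∃ i : Fin q, {n | ψ n t = i} ∈ U := by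
    intro t
    have huniv : (⋃ i ∈ (Finset.univ : Finset (Fin q)), {n | ψ n t = i}) = Set.univ := by
      ext n; simp only [Set.mem_iUnion, Set.mem_univ, iff_true, Set.mem_setOf_eq]
      exact ⟨ψ n t, Finset.mem_univ _, rfl⟩
    have : (⋃ i ∈ ((Finset.univ : Finset (Fin q)) : Set (Fin q)), {n | ψ n t = i}) ∈ U := by
      simp only [Finset.coe_univ]
      rw [show (⋃ i ∈ (Set.univ : Set (Fin q)), {n | ψ n t = i}) =
        (⋃ i ∈ (Finset.univ : Finset (Fin q)), {n | ψ n t = i}) by simp, huniv]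
      exact Filter.univ_mem
    obtain ⟨i, -, hi⟩ := (Ultrafilter.finite_biUnion_mem_iff (Set.finite_univ)).mp (by
      simpa using this)
    exact ⟨i, hi⟩
  choose χinf hχinf using hlim
  obtain ⟨T, hTinf, i, hTcol⟩ := ramsey3_finset χinf
  set m := G.verts.card with hm
  obtain ⟨W, hWT, hWcard⟩ := hTinf.exists_subset_card_eq m
  -- the set of good indices
  have hB : (⋂ t ∈ ((Finset.powersetCard 3 W : Finset (Finset ℕ)) : Set (Finset ℕ)),
      {n | ψ n t = χinf t}) ∈ U :=
    (Filter.biInter_mem (Finset.finite_toSet _)).mpr (fun t _ => hχinf t)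
  have hC : {n : ℕ | ∀ x ∈ W, x ≤ n} ∈ U := by
    apply Filter.mem_hyperfilter_of_finite_compl
    have : {n : ℕ | ∀ x ∈ W, x ≤ n}ᶜ ⊆ ⋃ x ∈ (W : Set ℕ), Set.Iio x := by
      intro n hn
      simp only [Set.mem_compl_iff, Set.mem_setOf_eq, not_forall] at hn
      obtain ⟨x, hx, hnx⟩ := hn
      exact Set.mem_biUnion hx (Set.mem_Iio.mpr (by omega))
    exact Set.Finite.subset (Set.Finite.biUnion (Finset.finite_toSet _)
      (fun x _ => Set.finite_Iio x)) this
  obtain ⟨n, hnB, hnC⟩ := Ultrafilter.nonempty_of_mem (Filter.inter_mem hB hC)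
  -- build a monochromatic copy in χN (n+1)
  have hcards : G.verts.card = W.card := by rw [hWcard]
  set eqv := Finset.equivOfCardEq hcards with heqv
  set g : ℕ → ℕ := fun v => if h : v ∈ G.verts then (eqv ⟨v, h⟩ : ℕ) else 0 with hg
  have hgmem : ∀ v ∈ G.verts, g v ∈ W := by
    intro v hv; rw [hg]; simp only [dif_pos hv]; exact (eqv ⟨v, hv⟩).2
  have hginj : Set.InjOn g ↑G.verts := by
    intro x hx y hy hxy
    have hx' : x ∈ G.verts := hx
    have hy' : y ∈ G.verts := hy
    rw [hg] at hxy
    simp only [dif_pos hx', dif_pos hy'] at hxy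
    have := eqv.injective (Subtype.ext hxy)
    exact congrArg Subtype.val this
  have hgle : ∀ v ∈ G.verts, g v ≤ n := fun v hv => hnC _ (hgmem v hv)
  set f : ℕ → Fin (n+1) := fun v => emb n (g v) with hf
  have hembg : ∀ v ∈ G.verts, ((f v : Fin (n+1)) : ℕ) = g v := by
    intro v hv
    simp only [hf, hembdef]
    exact Nat.mod_eq_of_lt (by have := hgle v hv; omega)
  apply hχN (n+1) i
  refine ⟨f, ?_, ?_⟩
  · intro x hx y hy hxy
    apply hginj hx hy
    have h2 := congrArg Fin.val hxy
    rwa [hembg x hx, hembg y hy] at h2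
  · intro e he
    have hesub : ↑e ⊆ (↑G.verts : Set ℕ) := Finset.coe_subset.mpr (G.edge_sub e he)
    set t : Finset ℕ := e.image g with ht
    have ht3 : t.card = 3 := by
      rw [ht, Finset.card_image_of_injOn (hginj.mono hesub), G.edge_card e he]
    have htW : t ∈ Finset.powersetCard 3 W := by
      refine Finset.mem_powersetCard.mpr ⟨?_, ht3⟩
      intro x hx
      obtain ⟨v, hv, rfl⟩ := Finset.mem_image.mp hx
      exact hgmem v (G.edge_sub e he hv)
    have hψn : ψ n t = χinf t := by
      have := Set.mem_iInter₂.mp hnB t (by exact_mod_cast htW)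
      exact this
    have hχi : χinf t = i := by
      apply hTcol t ?_ ht3
      intro x hx
      exact hWT ((Finset.mem_powersetCard.mp htW).1 hx)
    have himg : e.image f = t.image (emb n) := by
      rw [ht, Finset.image_image]; rfl
    rw [himg]
    have : χN (n+1) (t.image (emb n)) = ψ n t := rfl
    rw [this, hψn, hχi]

lemma ramseyProp_mono (q : ℕ) (Gs : Fin q → ThreeGraph) (M N : ℕ) (hMN : M ≤ N)
    (hM : RamseyProp Gs M) : RamseyProp Gs N := by
  intro χ
  obtain ⟨i, f, hinj, hcol⟩ := hM (fun t => χ (t.image (Fin.castLE hMN)))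
  refine ⟨i, Fin.castLE hMN ∘ f, ?_, ?_⟩
  · intro x hx y hy hxy
    exact hinj hx hy (Fin.castLE_injective hMN hxy)
  · intro e he
    rw [← Finset.image_image]
    exact hcol e he
  
lemma rq_gt (G : ThreeGraph) (q N : ℕ) (hq : 0 < q)
    (hcolor : ∃ χ : Finset (Fin N) → Fin q, ∀ i : Fin q, ¬ MonoCopy χ i G) :
    N < rq G q := by
  obtain ⟨N0, hN0⟩ := ramsey_exists G q hq
  have hne : {M | RamseyProp (fun _ : Fin q => G) M}.Nonempty := ⟨N0, hN0⟩
  have hmem := Nat.sInf_mem hne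
  by_contra hcon
  push_neg at hcon
  obtain ⟨χ, hχ⟩ := hcolor
  obtain ⟨i, hi⟩ := ramseyProp_mono q _ _ N hcon hmem χ
  exact hχ i hi

end Aux


/-- Let `G` be a 3-uniform hypergraph with at least two edges. There is a
constant `C = C(G)` such that for all `N ≥ 3` and all
`q ≥ C · (N³ / ex(N, G)) · log N`, there is a `q`-coloring of the triples of `Fin N` with
no monochromatic copy of `G`; in particular `r(G; q) > N` for such `q`. -/
theorem stmt19 (G : ThreeGraph) (hG : 2 ≤ G.edges.card) :
    ∃ C : ℝ, 0 < C ∧ ∀ N q : ℕ, 3 ≤ N →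
      C * ((N : ℝ) ^ 3 / (exNum N G : ℝ)) * Real.log N ≤ (q : ℝ) →
      (∃ χ : Finset (Fin N) → Fin q, ∀ i : Fin q, ¬ MonoCopy χ i G) ∧
      N < rq G q := by
  refine ⟨4, by norm_num, ?_⟩
  intro N q hN hq
  have hNR : (1:ℝ) < N := by exact_mod_cast (by omega : 1 < N)
  obtain ⟨hex1, hexle, -⟩ := exNum_mem G hG hN
  have hexpos : (0:ℝ) < (exNum N G : ℝ) := by exact_mod_cast hex1
  have hlogpos : 0 < Real.log N := Real.log_pos hNR
  have hrhspos : 0 < 4 * ((N : ℝ) ^ 3 / (exNum N G : ℝ)) * Real.log N := by positivity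
  have hq0 : 1 ≤ q := by
    rcases Nat.eq_zero_or_pos q with h | h
    · subst h; norm_num at hq; linarith
    · exact h
  set T := N.choose 3 with hT
  set x := exNum N G with hx
  have hT1 : 1 ≤ T := Nat.choose_pos (by omega)
  have hTN3 : T ≤ N ^ 3 := Nat.choose_le_pow N 3
  have harith : T * (T - x) ^ q < T ^ q := by
    rcases Nat.lt_or_ge x T with hxT | hxT
    · -- real-number computation
      set TR : ℝ := (T : ℝ) with hTR
      set xR : ℝ := (x : ℝ) with hxR
      have hTRpos : (0:ℝ) < TR := by rw [hTR]; exact_mod_cast hT1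
      have hTR1 : (1:ℝ) ≤ TR := by rw [hTR]; exact_mod_cast hT1
      have hxRpos : (0:ℝ) < xR := hexpos
      have hxRTR : xR < TR := by rw [hTR, hxR]; exact_mod_cast hxT
      have hkey : TR * Real.log TR < q * xR := by
        have hstep : 4 * ((N:ℝ) ^ 3 / xR) * Real.log N * xR = 4 * ((N:ℝ) ^ 3 * Real.log N) := by
          field_simp [hxRpos.ne']
        have hmul : 4 * ((N:ℝ) ^ 3 * Real.log N) ≤ q * xR := by
          rw [← hstep]
          exact mul_le_mul_of_nonneg_right hq hxRpos.le
        have hlogT : Real.log TR ≤ 3 * Real.log N := by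
          have h1 : Real.log TR ≤ Real.log ((N:ℝ) ^ 3) :=
            Real.log_le_log hTRpos (by rw [hTR]; exact_mod_cast hTN3)
          rwa [Real.log_pow, Nat.cast_ofNat] at h1
        have hN3pos : (0:ℝ) < (N:ℝ) ^ 3 := by positivity
        have h2 : TR * Real.log TR ≤ (N:ℝ) ^ 3 * (3 * Real.log N) := by
          have hlogTnn : 0 ≤ Real.log TR := Real.log_nonneg hTR1
          calc TR * Real.log TR ≤ (N:ℝ) ^ 3 * Real.log TR :=
                mul_le_mul_of_nonneg_right (by rw [hTR]; exact_mod_cast hTN3) hlogTnn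
            _ ≤ (N:ℝ) ^ 3 * (3 * Real.log N) :=
                mul_le_mul_of_nonneg_left hlogT hN3pos.le
        have h3 : (N:ℝ) ^ 3 * (3 * Real.log N) < 4 * ((N:ℝ) ^ 3 * Real.log N) := by
          nlinarith [mul_pos hN3pos hlogpos]
        linarith
      have hsub : (0:ℝ) ≤ TR - xR := by linarith
      have hlog : Real.log TR < q * xR / TR := by
        rw [lt_div_iff₀ hTRpos]
        linarith [hkey]
      have hexp : TR < Real.exp (q * xR / TR) := (Real.log_lt_iff_lt_exp hTRpos).mp hlog
      have h1 : TR - xR ≤ TR * Real.exp (-(xR / TR)) := by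
        have ha := Real.add_one_le_exp (-(xR / TR))
        have h2 : 1 - xR / TR ≤ Real.exp (-(xR / TR)) := by linarith
        have h3 : TR * (1 - xR / TR) ≤ TR * Real.exp (-(xR / TR)) :=
          mul_le_mul_of_nonneg_left h2 hTRpos.le
        calc TR - xR = TR * (1 - xR / TR) := by field_simp
          _ ≤ TR * Real.exp (-(xR / TR)) := h3
      have h3 : (TR - xR) ^ q ≤ (TR * Real.exp (-(xR / TR))) ^ q :=
        pow_le_pow_left₀ hsub h1 q
      have h4 : (TR * Real.exp (-(xR / TR))) ^ q = TR ^ q * Real.exp (-(q * xR / TR)) := by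
        rw [mul_pow, ← Real.exp_nat_mul]
        ring_nf
      have h5 : TR * Real.exp (-(q * xR / TR)) < 1 := by
        rw [Real.exp_neg, ← div_eq_mul_inv]
        exact (div_lt_one (Real.exp_pos _)).mpr hexp
      have hfinal : TR * (TR - xR) ^ q < TR ^ q := by
        calc TR * (TR - xR) ^ q ≤ TR * (TR ^ q * Real.exp (-(q * xR / TR))) :=
              mul_le_mul_of_nonneg_left (h3.trans_eq h4) hTRpos.le
          _ = TR ^ q * (TR * Real.exp (-(q * xR / TR))) := by ring
          _ < TR ^ q * 1 := mul_lt_mul_of_pos_left h5 (pow_pos hTRpos q)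
          _ = TR ^ q := mul_one _
      rw [← Nat.cast_lt (α := ℝ)]
      push_cast [Nat.cast_sub hxT.le]
      exact hfinal
    · have hz : T - x = 0 := by omega
      rw [hz, zero_pow (by omega : q ≠ 0), Nat.mul_zero]
      exact pow_pos (by omega) q
  obtain ⟨χ, hχ⟩ := good_coloring G hG N q hN hq0 harith
  exact ⟨⟨χ, hχ⟩, rq_gt G q N (by omega) ⟨χ, hχ⟩⟩
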